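/- arXiv:2105.11733 — 2 statements merged into one kernel-verified Lean document; each statement's English description precedes it below -/
import Mathlib

section
/- Let s, s' ∈ S. For each i ∈ {1,…,n}, let Z_1^i,…,Z_m^i be i.i.d. with distribution π_{i,s} and Z'^i_1,…,Z'^i_m be i.i.d. with distribution π_{i,s'}; let B be a uniformly distributed random size-b subset of {1,…,n}; assume all these random objects are mutually independent. Define η := (1/b) Σ_{i∈B} ( m^{-1} Σ_{r=1}^m H_i(Z_r^i) − m^{-1} Σ_{r=1}^m H_i(Z'^i_r) − h_i(s) + h_i(s') ) and C_v := 2 sup_{u∈S} (1/n) Σ_{i=1}^n ∫_Z ‖H_i(z) − h_i(u)‖² π_{i,u}(dz), assumed finite. Then E[ ‖η‖² ] ≤ C_v / (b m). -/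
open MeasureTheory ProbabilityTheory Matrix
open scoped BigOperators

noncomputable section

instance {n : ℕ} : MeasurableSpace (Finset (Fin n)) := ⊤

/-- Squared Euclidean norm on `ℝ^q`. -/
def sqnorm {q : ℕ} (v : Fin q → ℝ) : ℝ := v ⬝ᵥ v

/-- Index type for the collection of random objects: the draws `Z_r^i`, the draws `Z'^i_r`,
and the random minibatch `B`. -/
abbrev MCIndex (n m : ℕ) := (Fin n × Fin m) ⊕ ((Fin n × Fin m) ⊕ Unit)

/-- Codomain of each random object in the collection. -/
abbrev MCCodom (n m : ℕ) (Z : Type) : MCIndex n m → Type :=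
  fun k => match k with
  | .inl _ => Z
  | .inr (.inl _) => Z
  | .inr (.inr _) => Finset (Fin n)

instance {n m : ℕ} {Z : Type} [MeasurableSpace Z] (k : MCIndex n m) :
    MeasurableSpace (MCCodom n m Z k) := by
  cases k with
  | inl _ => exact inferInstanceAs (MeasurableSpace Z)
  | inr k => cases k with
    | inl _ => exact inferInstanceAs (MeasurableSpace Z)
    | inr _ => exact inferInstanceAs (MeasurableSpace (Finset (Fin n)))

/-- The collection of random objects, as a single dependent family. -/
def MCFam {n m : ℕ} {Z : Type} {Ω : Type*} (Zr Zr' : Fin n → Fin m → Ω → Z)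
    (Bf : Ω → Finset (Fin n)) : ∀ k : MCIndex n m, Ω → MCCodom n m Z k :=
  fun k => match k with
  | .inl (i, r) => Zr i r
  | .inr (.inl (i, r)) => Zr' i r
  | .inr (.inr _) => Bf

/-- The set of values `(1/n) ∑_i ∫ ‖H_i(z) − h_i(u)‖² π_{i,u}(dz)`, `u ∈ S`, whose supremum
(multiplied by `2`) defines `C_v`. -/
def CvSet (n q : ℕ) {Z : Type} [MeasurableSpace Z] (S : Set (Fin q → ℝ))
    (π : Fin n → (Fin q → ℝ) → Measure Z) (H : Fin n → Z → (Fin q → ℝ)) : Set ℝ :=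
  {c | ∃ u ∈ S, c = (n : ℝ)⁻¹ * ∑ i, ∫ z, sqnorm (H i z - ∫ z', H i z' ∂(π i u)) ∂(π i u)}

section Aux
open scoped ENNReal

lemma sqnorm_eq_sum {q : ℕ} (v : Fin q → ℝ) : sqnorm v = ∑ j, (v j) ^ 2 := by
  simp [sqnorm, dotProduct, sq]

lemma sqnorm_smul {q : ℕ} (c : ℝ) (v : Fin q → ℝ) :
    sqnorm (c • v) = c ^ 2 * sqnorm v := by
  simp only [sqnorm_eq_sum, Pi.smul_apply, smul_eq_mul, Finset.mul_sum]
  exact Finset.sum_congr rfl fun j _ => by ring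

lemma memLp_two_integrable_mul {Ω : Type*} [MeasurableSpace Ω] {P : Measure Ω}
    {f g : Ω → ℝ} (hf : MemLp f 2 P) (hg : MemLp g 2 P) :
    Integrable (fun ω => f ω * g ω) P := by
  have h : MemLp (f • g) 1 P := hg.smul hf
  rw [memLp_one_iff_integrable] at h
  exact h

lemma card_filter_mem_powersetCard {n b : ℕ} (hb : 0 < b) (i : Fin n) :
    ((Finset.powersetCard b (Finset.univ : Finset (Fin n))).filter
      (fun A => i ∈ A)).card = (n - 1).choose (b - 1) := by
  classical
  have key : ((Finset.powersetCard b (Finset.univ : Finset (Fin n))).filter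
      (fun A => i ∈ A)).card
      = (Finset.powersetCard (b - 1) ((Finset.univ : Finset (Fin n)).erase i)).card := by
    apply Finset.card_bij' (fun A _ => A.erase i) (fun B _ => insert i B)
    · intro A hA
      simp only [Finset.mem_filter] at hA
      exact Finset.insert_erase hA.2
    · intro B hB
      simp only [Finset.mem_powersetCard] at hB
      have hiB : i ∉ B := fun h => (Finset.mem_erase.mp (hB.1 h)).1 rfl
      exact Finset.erase_insert hiB
    · intro A hA
      simp only [Finset.mem_filter, Finset.mem_powersetCard] at hA
      simp only [Finset.mem_powersetCard]
      exact ⟨Finset.erase_subset_erase i hA.1.1,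
        by rw [Finset.card_erase_of_mem hA.2, hA.1.2]⟩
    · intro B hB
      simp only [Finset.mem_powersetCard] at hB
      have hiB : i ∉ B := fun h => (Finset.mem_erase.mp (hB.1 h)).1 rfl
      simp only [Finset.mem_filter, Finset.mem_powersetCard]
      refine ⟨⟨Finset.subset_univ _, ?_⟩, Finset.mem_insert_self _ _⟩
      rw [Finset.card_insert_of_notMem hiB, hB.2, Nat.sub_add_cancel hb]
  rw [key, Finset.card_powersetCard, Finset.card_erase_of_mem (Finset.mem_univ i),
    Finset.card_univ, Fintype.card_fin]

lemma integral_ind_uniform {n b : ℕ} (hb : 0 < b) (hbn : b ≤ n) {Ω : Type}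
    [MeasurableSpace Ω] (P : Measure Ω) [IsProbabilityMeasure P]
    (Bf : Ω → Finset (Fin n)) (hBmeas : Measurable Bf)
    (ne : (Finset.powersetCard b (Finset.univ : Finset (Fin n))).Nonempty)
    (hlawB : Measure.map Bf P = (PMF.uniformOfFinset _ ne).toMeasure) (i : Fin n) :
    ∫ ω, (if i ∈ Bf ω then (1 : ℝ) else 0) ∂P = b / n := by
  classical
  have hn : 0 < n := lt_of_lt_of_le hb hbn
  set t := Finset.powersetCard b (Finset.univ : Finset (Fin n)) with ht
  have hmeasg : Measurable (fun A : Finset (Fin n) => if i ∈ A then (1 : ℝ) else 0) :=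
    measurable_from_top
  rw [← MeasureTheory.integral_map hBmeas.aemeasurable hmeasg.aestronglyMeasurable, hlawB]
  have hset : (fun A : Finset (Fin n) => if i ∈ A then (1 : ℝ) else 0)
      = Set.indicator {A : Finset (Fin n) | i ∈ A} (fun _ => (1 : ℝ)) := by
    funext A; simp [Set.indicator_apply]
  have hms : MeasurableSet {A : Finset (Fin n) | i ∈ A} := trivial
  rw [hset, MeasureTheory.integral_indicator_const (1 : ℝ) hms, smul_eq_mul, mul_one]
  have happ : (PMF.uniformOfFinset t ne).toMeasure {A : Finset (Fin n) | i ∈ A}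
      = ((n - 1).choose (b - 1) : ℝ≥0∞) * ((n.choose b : ℝ≥0∞))⁻¹ := by
    rw [PMF.toMeasure_apply _ hms, tsum_fintype]
    have hterm : ∀ A : Finset (Fin n),
        Set.indicator {A : Finset (Fin n) | i ∈ A} (⇑(PMF.uniformOfFinset t ne)) A
        = if A ∈ t.filter (fun A => i ∈ A) then ((t.card : ℝ≥0∞))⁻¹ else 0 := by
      intro A
      simp only [Set.indicator_apply, Set.mem_setOf_eq, PMF.uniformOfFinset_apply,
        Finset.mem_filter]
      split_ifs with h1 h2 h3 h3 <;> first | rfl | (exfalso; tauto)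
    simp only [hterm]
    rw [Finset.sum_ite_mem, Finset.univ_inter, Finset.sum_const, nsmul_eq_mul]
    congr 1
    · exact_mod_cast congrArg Nat.cast (card_filter_mem_powersetCard hb i)
    · congr 1
      rw [ht, Finset.card_powersetCard, Finset.card_univ, Fintype.card_fin]
  rw [measureReal_def, happ]
  have hCpos : 0 < n.choose b := Nat.choose_pos hbn
  rw [ENNReal.toReal_mul, ENNReal.toReal_inv, ENNReal.toReal_natCast, ENNReal.toReal_natCast]
  have hkey : n * (n - 1).choose (b - 1) = n.choose b * b := by
    have h := Nat.add_one_mul_choose_eq (n - 1) (b - 1)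
    simp only [Nat.succ_eq_add_one, Nat.sub_add_cancel hn, Nat.sub_add_cancel hb] at h
    exact h
  have hkey' : ((n : ℝ)) * ((n - 1).choose (b - 1) : ℝ) = (n.choose b : ℝ) * b := by
    exact_mod_cast congrArg Nat.cast hkey
  have hCne : ((n.choose b : ℝ)) ≠ 0 := by exact_mod_cast hCpos.ne'
  have hnne : ((n : ℝ)) ≠ 0 := by
    have : (0 : ℝ) < n := by exact_mod_cast hn
    exact this.ne'
  field_simp
  linarith

end Aux

/-- Index map from the variable bookkeeping `(i, t)` (with `t` indicating whether it is a draw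
from `π i s` or from `π i s'`, and which of the `m` draws) to `MCIndex`. -/
def kap {n m : ℕ} (i : Fin n) : Fin m ⊕ Fin m → MCIndex n m
  | .inl r => .inl (i, r)
  | .inr r => .inr (.inl (i, r))

lemma kap_ne_B {n m : ℕ} (i : Fin n) (t : Fin m ⊕ Fin m) :
    kap i t ≠ Sum.inr (Sum.inr ()) := by
  cases t <;> simp [kap]

lemma kap_inj {n m : ℕ} {i i' : Fin n} {t t' : Fin m ⊕ Fin m}
    (h : kap i t = kap i' t') : i = i' ∧ t = t' := by
  cases t <;> cases t' <;> simp [kap] at h <;> simp [h.1, h.2]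

/-- The centered single-draw variables (with sign). -/
def YY {n m q : ℕ} {Z Ω : Type} (H : Fin n → Z → (Fin q → ℝ)) (a a' : Fin n → Fin q → ℝ)
    (Zr Zr' : Fin n → Fin m → Ω → Z) (i : Fin n) (j : Fin q) :
    Fin m ⊕ Fin m → Ω → ℝ
  | .inl r => fun ω => H i (Zr i r ω) j - a i j
  | .inr r => fun ω => a' i j - H i (Zr' i r ω) j

/-- The same variables as functions of the underlying draw. -/
def gY {n m q : ℕ} {Z : Type} (H : Fin n → Z → (Fin q → ℝ)) (a a' : Fin n → Fin q → ℝ)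
    (i : Fin n) (j : Fin q) : (t : Fin m ⊕ Fin m) → MCCodom n m Z (kap i t) → ℝ
  | .inl _ => fun z => H i z j - a i j
  | .inr _ => fun z => a' i j - H i z j

lemma YY_eq_comp {n m q : ℕ} {Z Ω : Type} (H : Fin n → Z → (Fin q → ℝ))
    (a a' : Fin n → Fin q → ℝ) (Zr Zr' : Fin n → Fin m → Ω → Z) (Bf : Ω → Finset (Fin n))
    (i : Fin n) (j : Fin q) (t : Fin m ⊕ Fin m) :
    YY H a a' Zr Zr' i j t = gY H a a' i j t ∘ MCFam Zr Zr' Bf (kap i t) := by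
  cases t <;> rfl

/-- With `Z_r^i` i.i.d. `π_{i,s}`, `Z'^i_r` i.i.d. `π_{i,s'}`, `B` a uniform
random size-`b` subset of `{1,…,n}`, all mutually independent, the error
`η := (1/b) ∑_{i∈B} (m⁻¹ ∑_r H_i(Z_r^i) − m⁻¹ ∑_r H_i(Z'^i_r) − h_i(s) + h_i(s'))`
satisfies `E[‖η‖²] ≤ C_v/(b m)`, where
`C_v := 2 sup_{u∈S} (1/n) ∑_i ∫ ‖H_i(z) − h_i(u)‖² π_{i,u}(dz)` (assumed finite). -/
theorem mc_error_variance
    (n q b m : ℕ) (hb : 0 < b) (hm : 0 < m) (hbn : b ≤ n)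
    (Z : Type) [MeasurableSpace Z]
    (S : Set (Fin q → ℝ))
    (π : Fin n → (Fin q → ℝ) → Measure Z) (hπ : ∀ i u, IsProbabilityMeasure (π i u))
    (H : Fin n → Z → (Fin q → ℝ)) (hH : ∀ i, Measurable (H i))
    (s s' : Fin q → ℝ) (hs : s ∈ S) (hs' : s' ∈ S)
    (hsq : ∀ i, ∀ u ∈ S, MemLp (H i) 2 (π i u))
    (hCvfin : BddAbove (CvSet n q S π H))
    (Ω : Type) [MeasurableSpace Ω] (P : Measure Ω) [IsProbabilityMeasure P]
    (Zr Zr' : Fin n → Fin m → Ω → Z) (Bf : Ω → Finset (Fin n))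
    (hZmeas : ∀ i r, Measurable (Zr i r)) (hZ'meas : ∀ i r, Measurable (Zr' i r))
    (hBmeas : Measurable Bf)
    (hlawZ : ∀ i r, Measure.map (Zr i r) P = π i s)
    (hlawZ' : ∀ i r, Measure.map (Zr' i r) P = π i s')
    (hlawB : Measure.map Bf P
      = (PMF.uniformOfFinset (Finset.powersetCard b (Finset.univ : Finset (Fin n)))
          (Finset.powersetCard_nonempty.mpr (by simpa using hbn))).toMeasure)
    (hindep : iIndepFun (MCFam Zr Zr' Bf) P) :
    ∫ ω, sqnorm ((b : ℝ)⁻¹ • ∑ i ∈ Bf ω,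
        ((m : ℝ)⁻¹ • ∑ r, H i (Zr i r ω) - (m : ℝ)⁻¹ • ∑ r, H i (Zr' i r ω)
          - ∫ z, H i z ∂(π i s) + ∫ z, H i z ∂(π i s'))) ∂P
      ≤ (2 * sSup (CvSet n q S π H)) / (b * m) := by
  classical
  have hn : 0 < n := lt_of_lt_of_le hb hbn
  set a : Fin n → Fin q → ℝ := fun i => ∫ z, H i z ∂(π i s) with ha
  set a' : Fin n → Fin q → ℝ := fun i => ∫ z, H i z ∂(π i s') with ha'
  -- measurability of the family
  have hfam : ∀ k, Measurable (MCFam Zr Zr' Bf k) := by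
    rintro (⟨i, r⟩ | ⟨i, r⟩ | u)
    exacts [hZmeas i r, hZ'meas i r, hBmeas]
  have hgmeas : ∀ (i : Fin n) (j : Fin q) (t : Fin m ⊕ Fin m),
      Measurable (gY (m := m) H a a' i j t) := by
    intro i j t
    cases t with
    | inl r => exact ((measurable_pi_apply j).comp (hH i)).sub measurable_const
    | inr r => exact measurable_const.sub ((measurable_pi_apply j).comp (hH i))
  have hYmeas : ∀ (i : Fin n) (j : Fin q) (t : Fin m ⊕ Fin m),
      Measurable (YY H a a' Zr Zr' i j t) := by
    intro i j t
    rw [YY_eq_comp H a a' Zr Zr' Bf]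
    exact (hgmeas i j t).comp (hfam (kap i t))
  -- coordinates of H are in L²
  have hHL2c : ∀ (i : Fin n) (j : Fin q) (u : Fin q → ℝ), u ∈ S →
      MemLp (fun z => H i z j) 2 (π i u) := by
    intro i j u hu
    exact (ContinuousLinearMap.proj (R := ℝ) (φ := fun _ : Fin q => ℝ) j).comp_memLp'
      (hsq i u hu)
  have hHint : ∀ (i : Fin n) (u : Fin q → ℝ), u ∈ S → Integrable (H i) (π i u) := by
    intro i u hu
    haveI := hπ i u
    exact (hsq i u hu).integrable one_le_two
  -- coordinates of the composed variables are in L²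
  have hZL2 : ∀ (i : Fin n) (r : Fin m) (j : Fin q),
      MemLp (fun ω => H i (Zr i r ω) j) 2 P := by
    intro i r j
    have h1 : MemLp (fun z => H i z j) 2 (Measure.map (Zr i r) P) := by
      rw [hlawZ i r]; exact hHL2c i j s hs
    exact h1.comp_of_map (hZmeas i r).aemeasurable
  have hZ'L2 : ∀ (i : Fin n) (r : Fin m) (j : Fin q),
      MemLp (fun ω => H i (Zr' i r ω) j) 2 P := by
    intro i r j
    have h1 : MemLp (fun z => H i z j) 2 (Measure.map (Zr' i r) P) := by
      rw [hlawZ' i r]; exact hHL2c i j s' hs'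
    exact h1.comp_of_map (hZ'meas i r).aemeasurable
  have hYL2 : ∀ (i : Fin n) (j : Fin q) (t : Fin m ⊕ Fin m),
      MemLp (YY H a a' Zr Zr' i j t) 2 P := by
    intro i j t
    cases t with
    | inl r => exact (hZL2 i r j).sub (memLp_const (a i j))
    | inr r => exact (memLp_const (a' i j)).sub (hZ'L2 i r j)
  -- the means of the coordinates
  have haj : ∀ (i : Fin n) (j : Fin q), a i j = ∫ z, H i z j ∂(π i s) := by
    intro i j
    exact ((ContinuousLinearMap.proj (R := ℝ) (φ := fun _ : Fin q => ℝ) j).integral_comp_comm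
      (hHint i s hs)).symm
  have haj' : ∀ (i : Fin n) (j : Fin q), a' i j = ∫ z, H i z j ∂(π i s') := by
    intro i j
    exact ((ContinuousLinearMap.proj (R := ℝ) (φ := fun _ : Fin q => ℝ) j).integral_comp_comm
      (hHint i s' hs')).symm
  have hZmean : ∀ (i : Fin n) (r : Fin m) (j : Fin q),
      ∫ ω, H i (Zr i r ω) j ∂P = a i j := by
    intro i r j
    rw [haj i j, ← hlawZ i r]
    exact (integral_map (f := fun z => H i z j) (hZmeas i r).aemeasurable
      (Measurable.aestronglyMeasurable (by exact (measurable_pi_apply j).comp (hH i)))).symm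
  have hZ'mean : ∀ (i : Fin n) (r : Fin m) (j : Fin q),
      ∫ ω, H i (Zr' i r ω) j ∂P = a' i j := by
    intro i r j
    rw [haj' i j, ← hlawZ' i r]
    exact (integral_map (f := fun z => H i z j) (hZ'meas i r).aemeasurable
      (Measurable.aestronglyMeasurable (by exact (measurable_pi_apply j).comp (hH i)))).symm
  have hYmean : ∀ (i : Fin n) (j : Fin q) (t : Fin m ⊕ Fin m),
      ∫ ω, YY H a a' Zr Zr' i j t ω ∂P = 0 := by
    intro i j t
    cases t with
    | inl r =>
      have : (fun ω => YY H a a' Zr Zr' i j (Sum.inl r) ω)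
          = fun ω => H i (Zr i r ω) j - a i j := rfl
      rw [this, integral_sub ((hZL2 i r j).integrable one_le_two) (integrable_const _),
        hZmean i r j, integral_const]
      simp
    | inr r =>
      have : (fun ω => YY H a a' Zr Zr' i j (Sum.inr r) ω)
          = fun ω => a' i j - H i (Zr' i r ω) j := rfl
      rw [this, integral_sub (integrable_const _) ((hZ'L2 i r j).integrable one_le_two),
        hZ'mean i r j, integral_const]
      simp
  -- second moments
  have hYsq : ∀ (i : Fin n) (j : Fin q) (r : Fin m),
      ∫ ω, (YY H a a' Zr Zr' i j (Sum.inl r) ω) ^ 2 ∂P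
        = ∫ z, (H i z j - a i j) ^ 2 ∂(π i s) := by
    intro i j r
    have hmg : Measurable (fun z : Z => (H i z j - a i j) ^ 2) :=
      (((measurable_pi_apply j).comp (hH i)).sub measurable_const).pow_const 2
    rw [← hlawZ i r]
    exact (integral_map (f := fun z => (H i z j - a i j) ^ 2) (hZmeas i r).aemeasurable
      hmg.aestronglyMeasurable).symm
  have hYsq' : ∀ (i : Fin n) (j : Fin q) (r : Fin m),
      ∫ ω, (YY H a a' Zr Zr' i j (Sum.inr r) ω) ^ 2 ∂P
        = ∫ z, (H i z j - a' i j) ^ 2 ∂(π i s') := by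
    intro i j r
    have hmg : Measurable (fun z : Z => (H i z j - a' i j) ^ 2) :=
      (((measurable_pi_apply j).comp (hH i)).sub measurable_const).pow_const 2
    rw [← hlawZ' i r]
    have h1 : ∫ ω, (YY H a a' Zr Zr' i j (Sum.inr r) ω) ^ 2 ∂P
        = ∫ ω, (H i (Zr' i r ω) j - a' i j) ^ 2 ∂P := by
      congr 1
      funext ω
      show (a' i j - H i (Zr' i r ω) j) ^ 2 = (H i (Zr' i r ω) j - a' i j) ^ 2
      ring
    rw [h1]
    exact (integral_map (f := fun z => (H i z j - a' i j) ^ 2) (hZ'meas i r).aemeasurable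
      hmg.aestronglyMeasurable).symm
  -- expectation of the batch indicator
  have hχ : ∀ i : Fin n, ∫ ω, (if i ∈ Bf ω then (1 : ℝ) else 0) ∂P = (b : ℝ) / n :=
    integral_ind_uniform hb hbn P Bf hBmeas _ hlawB
  have hχmeas : ∀ i : Fin n, Measurable fun ω => if i ∈ Bf ω then (1 : ℝ) else 0 := by
    intro i
    exact (measurable_from_top
      (f := fun A : Finset (Fin n) => if i ∈ A then (1 : ℝ) else 0)).comp hBmeas
  -- independence: factorization of the indicator part
  have hindYχ : ∀ (j : Fin q) (p p' : Fin n × (Fin m ⊕ Fin m)),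
      IndepFun
        (fun ω => (if p.1 ∈ Bf ω then (1 : ℝ) else 0) * (if p'.1 ∈ Bf ω then (1 : ℝ) else 0))
        (fun ω => YY H a a' Zr Zr' p.1 j p.2 ω * YY H a a' Zr Zr' p'.1 j p'.2 ω) P := by
    intro j p p'
    have base := hindep.indepFun_prodMk hfam (kap p.1 p.2) (kap p'.1 p'.2)
      (Sum.inr (Sum.inr ())) (kap_ne_B p.1 p.2) (kap_ne_B p'.1 p'.2)
    have hφ : Measurable (fun z : (MCCodom n m Z (kap p.1 p.2)) × (MCCodom n m Z (kap p'.1 p'.2))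
        => gY H a a' p.1 j p.2 z.1 * gY H a a' p'.1 j p'.2 z.2) :=
      ((hgmeas p.1 j p.2).comp measurable_fst).mul ((hgmeas p'.1 j p'.2).comp measurable_snd)
    have hψ : Measurable (fun A : Finset (Fin n) =>
        (if p.1 ∈ A then (1 : ℝ) else 0) * (if p'.1 ∈ A then (1 : ℝ) else 0)) :=
      measurable_from_top
    have h := (base.comp hφ hψ).symm
    rw [YY_eq_comp H a a' Zr Zr' Bf p.1 j p.2, YY_eq_comp H a a' Zr Zr' Bf p'.1 j p'.2]
    exact h
  -- independence between distinct draws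
  have hindYY : ∀ (j : Fin q) (p p' : Fin n × (Fin m ⊕ Fin m)), p ≠ p' →
      IndepFun (YY H a a' Zr Zr' p.1 j p.2) (YY H a a' Zr Zr' p'.1 j p'.2) P := by
    intro j p p' hpp
    have hkk' : kap p.1 p.2 ≠ kap p'.1 p'.2 := by
      intro h
      obtain ⟨h1, h2⟩ := kap_inj h
      exact hpp (Prod.ext h1 h2)
    have base := hindep.indepFun hkk'
    rw [YY_eq_comp H a a' Zr Zr' Bf p.1 j p.2, YY_eq_comp H a a' Zr Zr' Bf p'.1 j p'.2]
    exact base.comp (hgmeas p.1 j p.2) (hgmeas p'.1 j p'.2)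
  -- integrability of the generic term
  have hTint : ∀ (j : Fin q) (p p' : Fin n × (Fin m ⊕ Fin m)),
      Integrable (fun ω =>
        ((if p.1 ∈ Bf ω then (1 : ℝ) else 0) * (if p'.1 ∈ Bf ω then (1 : ℝ) else 0))
        * (YY H a a' Zr Zr' p.1 j p.2 ω * YY H a a' Zr Zr' p'.1 j p'.2 ω)) P := by
    intro j p p'
    have hY2 : Integrable (fun ω => YY H a a' Zr Zr' p.1 j p.2 ω
        * YY H a a' Zr Zr' p'.1 j p'.2 ω) P :=
      memLp_two_integrable_mul (hYL2 p.1 j p.2) (hYL2 p'.1 j p'.2)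
    apply hY2.bdd_mul (c := 1)
    · exact ((hχmeas p.1).mul (hχmeas p'.1)).aestronglyMeasurable
    · refine Filter.Eventually.of_forall fun ω => ?_
      by_cases h1 : p.1 ∈ Bf ω <;> by_cases h2 : p'.1 ∈ Bf ω <;> simp [h1, h2]
  -- factorization of every term
  have hfact : ∀ (j : Fin q) (p p' : Fin n × (Fin m ⊕ Fin m)),
      ∫ ω, ((if p.1 ∈ Bf ω then (1 : ℝ) else 0) * (if p'.1 ∈ Bf ω then (1 : ℝ) else 0))
          * (YY H a a' Zr Zr' p.1 j p.2 ω * YY H a a' Zr Zr' p'.1 j p'.2 ω) ∂P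
        = (∫ ω, (if p.1 ∈ Bf ω then (1 : ℝ) else 0)
            * (if p'.1 ∈ Bf ω then (1 : ℝ) else 0) ∂P)
          * ∫ ω, YY H a a' Zr Zr' p.1 j p.2 ω * YY H a a' Zr Zr' p'.1 j p'.2 ω ∂P := by
    intro j p p'
    exact (hindYχ j p p').integral_mul_eq_mul_integral
      (((hχmeas p.1).mul (hχmeas p'.1)).aestronglyMeasurable)
      (((hYmeas p.1 j p.2).mul (hYmeas p'.1 j p'.2)).aestronglyMeasurable)
  -- vanishing of cross terms
  have hcross : ∀ (j : Fin q) (p p' : Fin n × (Fin m ⊕ Fin m)), p ≠ p' →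
      ∫ ω, YY H a a' Zr Zr' p.1 j p.2 ω * YY H a a' Zr Zr' p'.1 j p'.2 ω ∂P = 0 := by
    intro j p p' hpp
    have h := (hindYY j p p' hpp).integral_mul_eq_mul_integral
      (hYmeas p.1 j p.2).aestronglyMeasurable (hYmeas p'.1 j p'.2).aestronglyMeasurable
    rw [show ((YY H a a' Zr Zr' p.1 j p.2) * (YY H a a' Zr Zr' p'.1 j p'.2))
        = fun ω => YY H a a' Zr Zr' p.1 j p.2 ω * YY H a a' Zr Zr' p'.1 j p'.2 ω from rfl] at h
    rw [h, hYmean p.1 j p.2, hYmean p'.1 j p'.2, mul_zero]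
  -- pointwise expansion of the squared norm
  have hpt : ∀ ω, sqnorm ((b : ℝ)⁻¹ • ∑ i ∈ Bf ω,
        ((m : ℝ)⁻¹ • ∑ r, H i (Zr i r ω) - (m : ℝ)⁻¹ • ∑ r, H i (Zr' i r ω)
          - ∫ z, H i z ∂(π i s) + ∫ z, H i z ∂(π i s')))
      = (b : ℝ)⁻¹ ^ 2 * ((m : ℝ)⁻¹ ^ 2 * ∑ j : Fin q, ∑ p : Fin n × (Fin m ⊕ Fin m),
          ∑ p' : Fin n × (Fin m ⊕ Fin m),
          ((if p.1 ∈ Bf ω then (1 : ℝ) else 0) * (if p'.1 ∈ Bf ω then (1 : ℝ) else 0))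
          * (YY H a a' Zr Zr' p.1 j p.2 ω * YY H a a' Zr Zr' p'.1 j p'.2 ω)) := by
    intro ω
    have hmne : (m : ℝ) ≠ 0 := Nat.cast_ne_zero.mpr hm.ne'
    rw [sqnorm_smul, sqnorm_eq_sum]
    congr 1
    rw [Finset.mul_sum]
    refine Finset.sum_congr rfl fun j _ => ?_
    have hDj : ∀ i : Fin n,
        ((m : ℝ)⁻¹ • ∑ r, H i (Zr i r ω) - (m : ℝ)⁻¹ • ∑ r, H i (Zr' i r ω)
          - ∫ z, H i z ∂(π i s) + ∫ z, H i z ∂(π i s')) j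
        = (m : ℝ)⁻¹ * ∑ t : Fin m ⊕ Fin m, YY H a a' Zr Zr' i j t ω := by
      intro i
      have hYl : ∀ r : Fin m, YY H a a' Zr Zr' i j (Sum.inl r) ω
          = H i (Zr i r ω) j - a i j := fun r => rfl
      have hYr : ∀ r : Fin m, YY H a a' Zr Zr' i j (Sum.inr r) ω
          = a' i j - H i (Zr' i r ω) j := fun r => rfl
      simp only [Pi.add_apply, Pi.sub_apply, Pi.smul_apply, Finset.sum_apply, smul_eq_mul,
        Fintype.sum_sum_type, hYl, hYr, Finset.sum_sub_distrib, Finset.sum_const,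
        Finset.card_univ, Fintype.card_fin, nsmul_eq_mul]
      rw [show (∫ z, H i z ∂(π i s)) j = a i j from rfl,
        show (∫ z, H i z ∂(π i s')) j = a' i j from rfl]
      field_simp
      ring
    have hvj : (∑ i ∈ Bf ω,
        ((m : ℝ)⁻¹ • ∑ r, H i (Zr i r ω) - (m : ℝ)⁻¹ • ∑ r, H i (Zr' i r ω)
          - ∫ z, H i z ∂(π i s) + ∫ z, H i z ∂(π i s'))) j
        = (m : ℝ)⁻¹ * ∑ p : Fin n × (Fin m ⊕ Fin m),
            (if p.1 ∈ Bf ω then (1 : ℝ) else 0) * YY H a a' Zr Zr' p.1 j p.2 ω := by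
      rw [Finset.sum_apply]
      calc ∑ i ∈ Bf ω,
            ((m : ℝ)⁻¹ • ∑ r, H i (Zr i r ω) - (m : ℝ)⁻¹ • ∑ r, H i (Zr' i r ω)
              - ∫ z, H i z ∂(π i s) + ∫ z, H i z ∂(π i s')) j
          = ∑ i ∈ Finset.univ ∩ Bf ω,
            ((m : ℝ)⁻¹ • ∑ r, H i (Zr i r ω) - (m : ℝ)⁻¹ • ∑ r, H i (Zr' i r ω)
              - ∫ z, H i z ∂(π i s) + ∫ z, H i z ∂(π i s')) j := by
            rw [Finset.univ_inter]
        _ = ∑ i : Fin n, if i ∈ Bf ω then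
            ((m : ℝ)⁻¹ • ∑ r, H i (Zr i r ω) - (m : ℝ)⁻¹ • ∑ r, H i (Zr' i r ω)
              - ∫ z, H i z ∂(π i s) + ∫ z, H i z ∂(π i s')) j else 0 :=
            (Finset.sum_ite_mem _ _ _).symm
        _ = ∑ i : Fin n, (if i ∈ Bf ω then (1 : ℝ) else 0)
              * ((m : ℝ)⁻¹ * ∑ t : Fin m ⊕ Fin m, YY H a a' Zr Zr' i j t ω) := by
            refine Finset.sum_congr rfl fun i _ => ?_
            rw [hDj i]
            by_cases h : i ∈ Bf ω <;> simp [h]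
        _ = (m : ℝ)⁻¹ * ∑ p : Fin n × (Fin m ⊕ Fin m),
              (if p.1 ∈ Bf ω then (1 : ℝ) else 0) * YY H a a' Zr Zr' p.1 j p.2 ω := by
            rw [Fintype.sum_prod_type]
            simp only [Finset.mul_sum]
            refine Finset.sum_congr rfl fun i _ => ?_
            refine Finset.sum_congr rfl fun t _ => ?_
            ring
    rw [hvj, mul_pow]
    congr 1
    rw [sq, Finset.sum_mul_sum]
    refine Finset.sum_congr rfl fun p _ => ?_
    refine Finset.sum_congr rfl fun p' _ => ?_
    ring
  -- the value of the triple sum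
  have hval : ∑ j : Fin q, ∫ ω, (∑ p : Fin n × (Fin m ⊕ Fin m),
        ∑ p' : Fin n × (Fin m ⊕ Fin m),
        ((if p.1 ∈ Bf ω then (1 : ℝ) else 0) * (if p'.1 ∈ Bf ω then (1 : ℝ) else 0))
        * (YY H a a' Zr Zr' p.1 j p.2 ω * YY H a a' Zr Zr' p'.1 j p'.2 ω)) ∂P
      = ((b : ℝ) / n) * ((m : ℝ) * ((∑ i, ∫ z, sqnorm (H i z - a i) ∂(π i s))
          + ∑ i, ∫ z, sqnorm (H i z - a' i) ∂(π i s'))) := by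
    have hχχ : ∀ i : Fin n, ∫ ω, (if i ∈ Bf ω then (1 : ℝ) else 0)
        * (if i ∈ Bf ω then (1 : ℝ) else 0) ∂P = (b : ℝ) / n := by
      intro i
      have hid : (fun ω => (if i ∈ Bf ω then (1 : ℝ) else 0)
          * (if i ∈ Bf ω then (1 : ℝ) else 0))
          = fun ω => (if i ∈ Bf ω then (1 : ℝ) else 0) := by
        funext ω
        by_cases h : i ∈ Bf ω <;> simp [h]
      rw [hid]
      exact hχ i
    have hdiagsum : ∀ (j : Fin q) (p : Fin n × (Fin m ⊕ Fin m)),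
        ∑ p' : Fin n × (Fin m ⊕ Fin m), ∫ ω,
          ((if p.1 ∈ Bf ω then (1 : ℝ) else 0) * (if p'.1 ∈ Bf ω then (1 : ℝ) else 0))
          * (YY H a a' Zr Zr' p.1 j p.2 ω * YY H a a' Zr Zr' p'.1 j p'.2 ω) ∂P
        = ((b : ℝ) / n) * ∫ ω, (YY H a a' Zr Zr' p.1 j p.2 ω) ^ 2 ∂P := by
      intro j p
      rw [Finset.sum_eq_single p]
      · rw [hfact j p p, hχχ p.1]
        congr 1
        congr 1
        funext ω
        exact (sq (YY H a a' Zr Zr' p.1 j p.2 ω)).symm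
      · intro p' _ hne
        rw [hfact j p p', hcross j p p' (Ne.symm hne), mul_zero]
      · intro habs
        exact absurd (Finset.mem_univ p) habs
    have hVs : ∀ (i : Fin n) (r : Fin m),
        ∑ j : Fin q, ∫ ω, (YY H a a' Zr Zr' i j (Sum.inl r) ω) ^ 2 ∂P
        = ∫ z, sqnorm (H i z - a i) ∂(π i s) := by
      intro i r
      calc ∑ j : Fin q, ∫ ω, (YY H a a' Zr Zr' i j (Sum.inl r) ω) ^ 2 ∂P
          = ∑ j : Fin q, ∫ z, (H i z j - a i j) ^ 2 ∂(π i s) :=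
            Finset.sum_congr rfl fun j _ => hYsq i j r
        _ = ∫ z, (∑ j : Fin q, (H i z j - a i j) ^ 2) ∂(π i s) :=
            (integral_finset_sum _ (fun j _ =>
              ((hHL2c i j s hs).sub (memLp_const _)).integrable_sq)).symm
        _ = ∫ z, sqnorm (H i z - a i) ∂(π i s) := by
            congr 1
            funext z
            rw [sqnorm_eq_sum]
            simp [Pi.sub_apply]
    have hVs' : ∀ (i : Fin n) (r : Fin m),
        ∑ j : Fin q, ∫ ω, (YY H a a' Zr Zr' i j (Sum.inr r) ω) ^ 2 ∂P
        = ∫ z, sqnorm (H i z - a' i) ∂(π i s') := by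
      intro i r
      calc ∑ j : Fin q, ∫ ω, (YY H a a' Zr Zr' i j (Sum.inr r) ω) ^ 2 ∂P
          = ∑ j : Fin q, ∫ z, (H i z j - a' i j) ^ 2 ∂(π i s') :=
            Finset.sum_congr rfl fun j _ => hYsq' i j r
        _ = ∫ z, (∑ j : Fin q, (H i z j - a' i j) ^ 2) ∂(π i s') :=
            (integral_finset_sum _ (fun j _ =>
              ((hHL2c i j s' hs').sub (memLp_const _)).integrable_sq)).symm
        _ = ∫ z, sqnorm (H i z - a' i) ∂(π i s') := by
            congr 1
            funext z
            rw [sqnorm_eq_sum]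
            simp [Pi.sub_apply]
    calc ∑ j : Fin q, ∫ ω, (∑ p : Fin n × (Fin m ⊕ Fin m),
          ∑ p' : Fin n × (Fin m ⊕ Fin m),
          ((if p.1 ∈ Bf ω then (1 : ℝ) else 0) * (if p'.1 ∈ Bf ω then (1 : ℝ) else 0))
          * (YY H a a' Zr Zr' p.1 j p.2 ω * YY H a a' Zr Zr' p'.1 j p'.2 ω)) ∂P
        = ∑ j : Fin q, ∑ p : Fin n × (Fin m ⊕ Fin m), ∑ p' : Fin n × (Fin m ⊕ Fin m),
          ∫ ω, ((if p.1 ∈ Bf ω then (1 : ℝ) else 0) * (if p'.1 ∈ Bf ω then (1 : ℝ) else 0))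
          * (YY H a a' Zr Zr' p.1 j p.2 ω * YY H a a' Zr Zr' p'.1 j p'.2 ω) ∂P := by
          refine Finset.sum_congr rfl fun j _ => ?_
          rw [integral_finset_sum _ (fun p _ => integrable_finset_sum _
            (fun p' _ => hTint j p p'))]
          exact Finset.sum_congr rfl fun p _ =>
            integral_finset_sum _ (fun p' _ => hTint j p p')
      _ = ∑ j : Fin q, ∑ p : Fin n × (Fin m ⊕ Fin m),
            ((b : ℝ) / n) * ∫ ω, (YY H a a' Zr Zr' p.1 j p.2 ω) ^ 2 ∂P := by
          refine Finset.sum_congr rfl fun j _ => ?_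
          exact Finset.sum_congr rfl fun p _ => hdiagsum j p
      _ = ((b : ℝ) / n) * ∑ p : Fin n × (Fin m ⊕ Fin m), ∑ j : Fin q,
            ∫ ω, (YY H a a' Zr Zr' p.1 j p.2 ω) ^ 2 ∂P := by
          simp only [← Finset.mul_sum]
          rw [Finset.sum_comm]
      _ = ((b : ℝ) / n) * ∑ i : Fin n,
            ((m : ℝ) * ∫ z, sqnorm (H i z - a i) ∂(π i s)
              + (m : ℝ) * ∫ z, sqnorm (H i z - a' i) ∂(π i s')) := by
          congr 1
          rw [Fintype.sum_prod_type]
          refine Finset.sum_congr rfl fun i _ => ?_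
          rw [Fintype.sum_sum_type]
          congr 1
          · calc ∑ r : Fin m, ∑ j : Fin q, ∫ ω, (YY H a a' Zr Zr' i j (Sum.inl r) ω) ^ 2 ∂P
                = ∑ _r : Fin m, ∫ z, sqnorm (H i z - a i) ∂(π i s) :=
                  Finset.sum_congr rfl fun r _ => hVs i r
              _ = (m : ℝ) * ∫ z, sqnorm (H i z - a i) ∂(π i s) := by
                  rw [Finset.sum_const, Finset.card_univ, Fintype.card_fin, nsmul_eq_mul]
          · calc ∑ r : Fin m, ∑ j : Fin q, ∫ ω, (YY H a a' Zr Zr' i j (Sum.inr r) ω) ^ 2 ∂P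
                = ∑ _r : Fin m, ∫ z, sqnorm (H i z - a' i) ∂(π i s') :=
                  Finset.sum_congr rfl fun r _ => hVs' i r
              _ = (m : ℝ) * ∫ z, sqnorm (H i z - a' i) ∂(π i s') := by
                  rw [Finset.sum_const, Finset.card_univ, Fintype.card_fin, nsmul_eq_mul]
      _ = ((b : ℝ) / n) * ((m : ℝ) * ((∑ i, ∫ z, sqnorm (H i z - a i) ∂(π i s))
            + ∑ i, ∫ z, sqnorm (H i z - a' i) ∂(π i s'))) := by
          rw [Finset.sum_add_distrib, ← Finset.mul_sum, ← Finset.mul_sum]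
          ring
  -- put everything together
  calc ∫ ω, sqnorm ((b : ℝ)⁻¹ • ∑ i ∈ Bf ω,
        ((m : ℝ)⁻¹ • ∑ r, H i (Zr i r ω) - (m : ℝ)⁻¹ • ∑ r, H i (Zr' i r ω)
          - ∫ z, H i z ∂(π i s) + ∫ z, H i z ∂(π i s'))) ∂P
      = (b : ℝ)⁻¹ ^ 2 * ((m : ℝ)⁻¹ ^ 2 * ∑ j : Fin q, ∫ ω,
          (∑ p : Fin n × (Fin m ⊕ Fin m), ∑ p' : Fin n × (Fin m ⊕ Fin m),
          ((if p.1 ∈ Bf ω then (1 : ℝ) else 0) * (if p'.1 ∈ Bf ω then (1 : ℝ) else 0))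
          * (YY H a a' Zr Zr' p.1 j p.2 ω * YY H a a' Zr Zr' p'.1 j p'.2 ω)) ∂P) := by
        rw [show (fun ω => sqnorm ((b : ℝ)⁻¹ • ∑ i ∈ Bf ω,
          ((m : ℝ)⁻¹ • ∑ r, H i (Zr i r ω) - (m : ℝ)⁻¹ • ∑ r, H i (Zr' i r ω)
            - ∫ z, H i z ∂(π i s) + ∫ z, H i z ∂(π i s')))) = _ from funext hpt]
        rw [integral_const_mul, integral_const_mul,
          integral_finset_sum _ (fun j _ => integrable_finset_sum _
            (fun p _ => integrable_finset_sum _ (fun p' _ => hTint j p p')))]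
    _ ≤ (2 * sSup (CvSet n q S π H)) / (b * m) := by
        rw [hval]
        have hbne : (b : ℝ) ≠ 0 := Nat.cast_ne_zero.mpr hb.ne'
        have hmne : (m : ℝ) ≠ 0 := Nat.cast_ne_zero.mpr hm.ne'
        have hnne : (n : ℝ) ≠ 0 := Nat.cast_ne_zero.mpr hn.ne'
        have h1 : (n : ℝ)⁻¹ * ∑ i, ∫ z, sqnorm (H i z - a i) ∂(π i s)
            ≤ sSup (CvSet n q S π H) := le_csSup hCvfin ⟨s, hs, rfl⟩
        have h2 : (n : ℝ)⁻¹ * ∑ i, ∫ z, sqnorm (H i z - a' i) ∂(π i s')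
            ≤ sSup (CvSet n q S π H) := le_csSup hCvfin ⟨s', hs', rfl⟩
        have heq : (b : ℝ)⁻¹ ^ 2 * ((m : ℝ)⁻¹ ^ 2 * (((b : ℝ) / n) * ((m : ℝ) *
              ((∑ i, ∫ z, sqnorm (H i z - a i) ∂(π i s))
                + ∑ i, ∫ z, sqnorm (H i z - a' i) ∂(π i s')))))
            = ((b : ℝ) * m)⁻¹ * (((n : ℝ)⁻¹ * ∑ i, ∫ z, sqnorm (H i z - a i) ∂(π i s))
                + (n : ℝ)⁻¹ * ∑ i, ∫ z, sqnorm (H i z - a' i) ∂(π i s')) := by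
          field_simp
        rw [heq]
        have hle2 : ((n : ℝ)⁻¹ * ∑ i, ∫ z, sqnorm (H i z - a i) ∂(π i s))
              + (n : ℝ)⁻¹ * ∑ i, ∫ z, sqnorm (H i z - a' i) ∂(π i s')
            ≤ 2 * sSup (CvSet n q S π H) := by linarith
        calc ((b : ℝ) * m)⁻¹ * (((n : ℝ)⁻¹ * ∑ i, ∫ z, sqnorm (H i z - a i) ∂(π i s))
              + (n : ℝ)⁻¹ * ∑ i, ∫ z, sqnorm (H i z - a' i) ∂(π i s'))
            ≤ ((b : ℝ) * m)⁻¹ * (2 * sSup (CvSet n q S π H)) := by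
              apply mul_le_mul_of_nonneg_left hle2
              positivity
          _ = (2 * sSup (CvSet n q S π H)) / ((b : ℝ) * m) := by
              rw [div_eq_mul_inv]
              ring
end
end

section
/- Assume A1 and A2. Let s ∈ S, γ > 0 and H ∈ R^q, and set s⁺ := Prox_{B(s),γg}(s + γH). Then W(s⁺) + g(s⁺) ≤ W(s) + g(s) − (v_min/γ − L_Ẇ/2) ‖s⁺ − s‖² + ⟨ B(s)(H − h(s)), s⁺ − s ⟩. -/
open Matrix
open scoped BigOperators

noncomputable section

/-- Euclidean norm on `ℝ^q`. -/
def eunorm {q : ℕ} (v : Fin q → ℝ) : ℝ := Real.sqrt (v ⬝ᵥ v)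

/-- Objective function of the weighted proximal operator
`x ↦ γ g(x) + (1/2) (x-u)ᵀ B (x-u)`, with values in `(-∞, +∞]` (encoded as `EReal`). -/
def proxObj {q : ℕ} (B : Matrix (Fin q) (Fin q) ℝ) (γ : ℝ) (g : (Fin q → ℝ) → EReal)
    (u x : Fin q → ℝ) : EReal :=
  (γ : EReal) * g x + (((1 / 2) * ((x - u) ⬝ᵥ B.mulVec (x - u)) : ℝ) : EReal)

/-- `p = Prox_{B,γg}(u)`: `p` belongs to `S` and minimizes the prox objective over `S`. -/
def IsProxPt {q : ℕ} (S : Set (Fin q → ℝ)) (B : Matrix (Fin q) (Fin q) ℝ) (γ : ℝ)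
    (g : (Fin q → ℝ) → EReal) (u p : Fin q → ℝ) : Prop :=
  p ∈ S ∧ ∀ y ∈ S, proxObj B γ g u p ≤ proxObj B γ g u y

lemma sqnorm_nonneg' {q : ℕ} (v : Fin q → ℝ) : 0 ≤ sqnorm v := by
  unfold sqnorm dotProduct
  exact Finset.sum_nonneg fun i _ => mul_self_nonneg (v i)

lemma eunorm_nonneg' {q : ℕ} (v : Fin q → ℝ) : 0 ≤ eunorm v := Real.sqrt_nonneg _

lemma eunorm_mul_self {q : ℕ} (v : Fin q → ℝ) : eunorm v * eunorm v = sqnorm v :=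
  Real.mul_self_sqrt (sqnorm_nonneg' v)

lemma dot_le_eunorm {q : ℕ} (v w : Fin q → ℝ) : v ⬝ᵥ w ≤ eunorm v * eunorm w := by
  have h := Real.sum_mul_le_sqrt_mul_sqrt Finset.univ v w
  simpa [dotProduct, eunorm, pow_two] using h

lemma eunorm_smul_nonneg {q : ℕ} {t : ℝ} (ht : 0 ≤ t) (v : Fin q → ℝ) :
    eunorm (t • v) = t * eunorm v := by
  unfold eunorm
  rw [smul_dotProduct, dotProduct_smul, smul_eq_mul, smul_eq_mul, ← mul_assoc,
    Real.sqrt_mul (mul_self_nonneg t), Real.sqrt_mul_self ht]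

lemma dot_mulVec_symm {q : ℕ} {A : Matrix (Fin q) (Fin q) ℝ} (hA : A.IsHermitian)
    (v w : Fin q → ℝ) : v ⬝ᵥ A.mulVec w = w ⬝ᵥ A.mulVec v := by
  have hAt : Aᵀ = A := by
    have := hA.eq
    ext i j
    have := congrFun (congrFun this i) j
    simpa [Matrix.conjTranspose_apply] using this
  rw [Matrix.dotProduct_mulVec, ← Matrix.mulVec_transpose, hAt, dotProduct_comm]

lemma quad_lower_bound {q : ℕ} (A : Matrix (Fin q) (Fin q) ℝ) (c : ℝ)
    (hA : A.PosDef) (hspec : ∀ μ ∈ spectrum ℝ A, c ≤ μ) (v : Fin q → ℝ) :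
    c * sqnorm v ≤ v ⬝ᵥ A.mulVec v := by
  have hM : (A - c • 1).IsHermitian := by
    refine hA.1.sub ?_
    simp [Matrix.IsHermitian]
  have hps : (A - c • 1).PosSemidef := by
    refine hM.posSemidef_iff_eigenvalues_nonneg.mpr (fun i => ?_)
    obtain ⟨μ, hμ⟩ : ∃ μ : ℝ, μ = hM.eigenvalues i := ⟨_, rfl⟩
    rw [← hμ]
    have hmem : μ ∈ spectrum ℝ (A - c • 1) := hμ ▸ hM.eigenvalues_mem_spectrum_real i
    rw [← Algebra.algebraMap_eq_smul_one, ← spectrum.sub_singleton_eq] at hmem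
    rw [Set.mem_sub] at hmem
    obtain ⟨x, hx, y, hy, hxy⟩ := hmem
    rw [Set.mem_singleton_iff] at hy
    subst hy
    rw [Pi.zero_apply]
    linarith [hspec x hx]
  have h2 := hps.dotProduct_mulVec_nonneg v
  have hstar : star v = v := by simp
  rw [hstar, Matrix.sub_mulVec, Matrix.smul_mulVec, Matrix.one_mulVec,
    dotProduct_sub, dotProduct_smul, smul_eq_mul] at h2
  unfold sqnorm
  linarith

lemma descent_lemma {q : ℕ} (S V : Set (Fin q → ℝ)) (hScv : Convex ℝ S)
    (hSV : S ⊆ V)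
    (W : (Fin q → ℝ) → ℝ) (gW : (Fin q → ℝ) → (Fin q → ℝ))
    (hWdiff : ∀ x ∈ V, DifferentiableAt ℝ W x ∧ ∀ v, fderiv ℝ W x v = gW x ⬝ᵥ v)
    (LW : ℝ)
    (hWlip : ∀ x ∈ S, ∀ y ∈ S, eunorm (gW x - gW y) ≤ LW * eunorm (x - y))
    (s p : Fin q → ℝ) (hs : s ∈ S) (hp : p ∈ S) :
    W p ≤ W s + gW s ⬝ᵥ (p - s) + LW / 2 * sqnorm (p - s) := by
  set d := p - s with hd
  set c : ℝ → (Fin q → ℝ) := fun t => s + t • d with hc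
  have hcS : ∀ t ∈ Set.Icc (0:ℝ) 1, c t ∈ S := by
    intro t ht
    have : c t = (1 - t) • s + t • p := by
      funext i
      simp [hc, hd]
      ring
    rw [this]
    exact hScv hs hp (by linarith [ht.2]) ht.1 (by ring)
  set φ : ℝ → ℝ := fun t => W (c t) - t * (gW s ⬝ᵥ d) - LW / 2 * t ^ 2 * sqnorm d with hφ
  have hderiv : ∀ t ∈ Set.Icc (0:ℝ) 1,
      HasDerivAt φ (gW (c t) ⬝ᵥ d - gW s ⬝ᵥ d - LW / 2 * (2 * t) * sqnorm d) t := by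
    intro t ht
    have hcd : HasDerivAt c d t := by
      have := ((hasDerivAt_id' t).smul_const d).const_add s
      rw [one_smul] at this
      exact this
    have hV : c t ∈ V := hSV (hcS t ht)
    have hW := (hWdiff _ hV).1.hasFDerivAt
    have h1 : HasDerivAt (fun t => W (c t)) (gW (c t) ⬝ᵥ d) t := by
      have := hW.comp_hasDerivAt t hcd
      rw [(hWdiff _ hV).2 d] at this
      exact this
    have h2 : HasDerivAt (fun t : ℝ => t * (gW s ⬝ᵥ d)) (gW s ⬝ᵥ d) t := by
      simpa using (hasDerivAt_id t).mul_const (gW s ⬝ᵥ d)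
    have h3 : HasDerivAt (fun t : ℝ => LW / 2 * t ^ 2 * sqnorm d)
        (LW / 2 * (2 * t) * sqnorm d) t := by
      have := ((hasDerivAt_pow 2 t).const_mul (LW / 2)).mul_const (sqnorm d)
      simpa [mul_comm, mul_assoc, mul_left_comm] using this
    exact (h1.sub h2).sub h3
  have hanti : AntitoneOn φ (Set.Icc (0:ℝ) 1) := by
    apply antitoneOn_of_deriv_nonpos (convex_Icc 0 1)
    · intro t ht
      exact (hderiv t ht).continuousAt.continuousWithinAt
    · intro t ht
      rw [interior_Icc] at ht
      exact (hderiv t (Set.mem_Icc_of_Ioo ht)).differentiableAt.differentiableWithinAt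
    · intro t ht
      rw [interior_Icc] at ht
      have htI : t ∈ Set.Icc (0:ℝ) 1 := Set.mem_Icc_of_Ioo ht
      rw [(hderiv t htI).deriv]
      have hkey : (gW (c t) - gW s) ⬝ᵥ d ≤ LW * t * sqnorm d := by
        calc (gW (c t) - gW s) ⬝ᵥ d ≤ eunorm (gW (c t) - gW s) * eunorm d :=
              dot_le_eunorm _ _
          _ ≤ (LW * eunorm (c t - s)) * eunorm d := by
              have := hWlip _ (hcS t htI) _ hs
              exact mul_le_mul_of_nonneg_right this (eunorm_nonneg' d)
          _ = LW * t * sqnorm d := by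
              have : c t - s = t • d := by funext i; simp [hc]
              rw [this, eunorm_smul_nonneg (le_of_lt ht.1)]
              rw [← eunorm_mul_self d]; ring
      have hsub : gW (c t) ⬝ᵥ d - gW s ⬝ᵥ d = (gW (c t) - gW s) ⬝ᵥ d := by
        rw [sub_dotProduct]
      rw [hsub] at *
      nlinarith [hkey]
  have h01 := hanti (Set.left_mem_Icc.mpr zero_le_one) (Set.right_mem_Icc.mpr zero_le_one)
    zero_le_one
  have hc0 : c 0 = s := by funext i; simp [hc]
  have hc1 : c 1 = p := by funext i; simp [hc, hd]
  rw [hφ] at h01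
  simp only [hc0, hc1] at h01
  norm_num at h01
  linarith

/-- Under A1 and A2, for `s ∈ S`, `γ > 0`, `H ∈ ℝ^q` and
`s⁺ := Prox_{B(s),γg}(s + γH)` one has
`W(s⁺) + g(s⁺) ≤ W(s) + g(s) − (v_min/γ − L_Ẇ/2) ‖s⁺ − s‖² + ⟨B(s)(H − h(s)), s⁺ − s⟩`. -/
theorem prox_descent_inequality
    (q n : ℕ) (hn : 0 < n)
    -- A1
    (S V : Set (Fin q → ℝ)) (hScl : IsClosed S) (hScv : Convex ℝ S)
    (hVopen : IsOpen V) (hSV : S ⊆ V)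
    (W : (Fin q → ℝ) → ℝ) (gW : (Fin q → ℝ) → (Fin q → ℝ))
    (hWdiff : ∀ x ∈ V, DifferentiableAt ℝ W x ∧ ∀ v, fderiv ℝ W x v = gW x ⬝ᵥ v)
    (hWcont : ContinuousOn gW V)
    (LW : ℝ) (hLW : 0 ≤ LW)
    (hWlip : ∀ x ∈ S, ∀ y ∈ S, eunorm (gW x - gW y) ≤ LW * eunorm (x - y))
    (g : (Fin q → ℝ) → EReal)
    (hg_ne_bot : ∀ x, g x ≠ ⊥)
    (hg_proper : ∃ x ∈ S, g x ≠ ⊤)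
    (hg_lsc : LowerSemicontinuousOn g S)
    (hg_cvx : ∀ x ∈ S, ∀ y ∈ S, ∀ a b : ℝ, 0 ≤ a → 0 ≤ b → a + b = 1 →
      g (a • x + b • y) ≤ (a : EReal) * g x + (b : EReal) * g y)
    -- A2
    (B : (Fin q → ℝ) → Matrix (Fin q) (Fin q) ℝ)
    (vmin vmax : ℝ) (hvmin : 0 < vmin) (hvv : vmin ≤ vmax)
    (hBposdef : ∀ s ∈ S, (B s).PosDef)
    (hBspec : ∀ s ∈ S, ∀ μ ∈ spectrum ℝ (B s), μ ∈ Set.Icc vmin vmax)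
    (h : Fin n → (Fin q → ℝ) → (Fin q → ℝ))
    (Lh : Fin n → ℝ)
    (hLip : ∀ i, ∀ x ∈ S, ∀ y ∈ S, eunorm (h i x - h i y) ≤ Lh i * eunorm (x - y))
    (hgradrel : ∀ s ∈ S, -(B s)⁻¹.mulVec (gW s) = (n : ℝ)⁻¹ • ∑ i, h i s)
    -- the prox step
    (s : Fin q → ℝ) (hsS : s ∈ S) (γ : ℝ) (hγ : 0 < γ) (H : Fin q → ℝ)
    (splus : Fin q → ℝ) (hsplus : IsProxPt S (B s) γ g (s + γ • H) splus) :
    (W splus : EReal) + g splus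
      ≤ (W s : EReal) + g s
        + ((-(vmin / γ - LW / 2) * sqnorm (splus - s)
            + ((B s).mulVec (H - (n : ℝ)⁻¹ • ∑ i, h i s)) ⬝ᵥ (splus - s) : ℝ) : EReal) := by
  obtain ⟨hpS, hmin⟩ := hsplus
  have hBpd := hBposdef s hsS
  have hBh : (B s).IsHermitian := hBpd.1
  set u : Fin q → ℝ := s + γ • H with hu
  set d : Fin q → ℝ := splus - s with hd
  set e : Fin q → ℝ := s - splus with he
  have hquad : ∀ v : Fin q → ℝ, vmin * sqnorm v ≤ v ⬝ᵥ (B s).mulVec v :=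
    fun v => quad_lower_bound _ _ hBpd (fun μ hμ => (hBspec s hsS μ hμ).1) v
  have hBinv : B s * (B s)⁻¹ = 1 :=
    Matrix.mul_nonsing_inv _ (isUnit_iff_ne_zero.mpr (ne_of_gt hBpd.det_pos))
  have hBhbar : (B s).mulVec ((n : ℝ)⁻¹ • ∑ i, h i s) = -(gW s) := by
    rw [← hgradrel s hsS, Matrix.mulVec_neg, Matrix.mulVec_mulVec, hBinv, Matrix.one_mulVec]
  -- case g s = ⊤
  rcases eq_or_ne (g s) ⊤ with hgs | hgs
  · rw [hgs, EReal.add_top_of_ne_bot (EReal.coe_ne_bot _),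
      EReal.top_add_of_ne_bot (EReal.coe_ne_bot _)]
    exact le_top
  obtain ⟨gs, hgseq⟩ : ∃ r : ℝ, g s = (r : EReal) :=
    ⟨(g s).toReal, (EReal.coe_toReal hgs (hg_ne_bot s)).symm⟩
  set Q : (Fin q → ℝ) → ℝ := fun x => 1 / 2 * ((x - u) ⬝ᵥ (B s).mulVec (x - u)) with hQ
  have hobj : ∀ x, proxObj (B s) γ g u x = (γ : EReal) * g x + ((Q x : ℝ) : EReal) :=
    fun x => rfl
  have hobjr : ∀ (x : Fin q → ℝ) (r : ℝ), g x = (r : EReal) →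
      proxObj (B s) γ g u x = ((γ * r + Q x : ℝ) : EReal) := by
    intro x r hr
    rw [hobj, hr, ← EReal.coe_mul, ← EReal.coe_add]
  -- g splus is finite
  have hps := hmin s hsS
  rw [hobjr s gs hgseq] at hps
  have hgps : g splus ≠ ⊤ := by
    intro htop
    rw [hobj, htop, EReal.mul_top_of_pos (by exact_mod_cast hγ),
      EReal.top_add_of_ne_bot (EReal.coe_ne_bot _)] at hps
    exact (EReal.coe_lt_top _).not_ge hps
  obtain ⟨gp, hgpeq⟩ : ∃ r : ℝ, g splus = (r : EReal) :=
    ⟨(g splus).toReal, (EReal.coe_toReal hgps (hg_ne_bot splus)).symm⟩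
  -- quadratic expansion
  have hQexp : ∀ t : ℝ, Q (splus + t • e)
      = Q splus + t * ((splus - u) ⬝ᵥ (B s).mulVec e)
        + t ^ 2 / 2 * (e ⬝ᵥ (B s).mulVec e) := by
    intro t
    have harr : (splus + t • e) - u = (splus - u) + t • e := by
      funext i; simp; ring
    rw [hQ]
    simp only [harr, Matrix.mulVec_add, Matrix.mulVec_smul, add_dotProduct, dotProduct_add,
      dotProduct_smul, smul_dotProduct, smul_eq_mul]
    rw [dot_mulVec_symm hBh e (splus - u)]
    ring
  set A0 : ℝ := (splus - u) ⬝ᵥ (B s).mulVec e with hA0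
  set c0 : ℝ := e ⬝ᵥ (B s).mulVec e with hc0
  have hc0nn : 0 ≤ c0 := le_trans (by nlinarith [sqnorm_nonneg' e]) (hquad e)
  -- key inequality at each t
  have hstep : ∀ t : ℝ, 0 < t → t ≤ 1 → γ * gp ≤ γ * gs + A0 + t / 2 * c0 := by
    intro t ht0 ht1
    set y : Fin q → ℝ := splus + t • e with hy
    have hyS : y ∈ S := by
      have : y = t • s + (1 - t) • splus := by
        funext i; simp [hy, he]; ring
      rw [this]
      exact hScv hsS hpS (le_of_lt ht0) (by linarith) (by ring)
    have hgy_le : g y ≤ ((t * gs + (1 - t) * gp : ℝ) : EReal) := by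
      have := hg_cvx s hsS splus hpS t (1 - t) (le_of_lt ht0) (by linarith) (by ring)
      rw [hgseq, hgpeq] at this
      have hyy : t • s + (1 - t) • splus = y := by
        funext i; simp [hy, he]; ring
      rw [hyy] at this
      calc g y ≤ (t : EReal) * (gs : EReal) + ((1 - t : ℝ) : EReal) * (gp : EReal) := this
        _ = ((t * gs + (1 - t) * gp : ℝ) : EReal) := by
            rw [← EReal.coe_mul, ← EReal.coe_mul, ← EReal.coe_add]
    have hgy_ne_top : g y ≠ ⊤ := fun htop => by
      rw [htop] at hgy_le
      exact (EReal.coe_lt_top _).not_ge hgy_le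
    obtain ⟨gy, hgyeq⟩ : ∃ r : ℝ, g y = (r : EReal) :=
      ⟨(g y).toReal, (EReal.coe_toReal hgy_ne_top (hg_ne_bot y)).symm⟩
    have hgyr : gy ≤ t * gs + (1 - t) * gp := by
      rw [hgyeq] at hgy_le
      exact_mod_cast hgy_le
    have hmy := hmin y hyS
    rw [hobjr splus gp hgpeq, hobjr y gy hgyeq] at hmy
    have hmyr : γ * gp + Q splus ≤ γ * gy + Q y := by exact_mod_cast hmy
    have hQy : Q y = Q splus + t * A0 + t ^ 2 / 2 * c0 := hQexp t
    have hmul : γ * gy ≤ γ * (t * gs + (1 - t) * gp) :=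
      mul_le_mul_of_nonneg_left hgyr (le_of_lt hγ)
    have hfin : t * (γ * gp) ≤ t * (γ * gs + A0 + t / 2 * c0) := by nlinarith
    exact (mul_le_mul_iff_right₀ ht0).mp hfin
  -- limit t → 0
  have hprox : γ * gp ≤ γ * gs + A0 := by
    have hεb : ∀ ε > (0:ℝ), γ * gp - ε ≤ γ * gs + A0 := by
      intro ε hε
      set t : ℝ := min 1 (ε * 2 / (c0 + 1)) with htdef
      have hc01 : (0:ℝ) < c0 + 1 := by linarith
      have ht0 : 0 < t := lt_min one_pos (by positivity)
      have ht1 : t ≤ 1 := min_le_left _ _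
      have hstep' := hstep t ht0 ht1
      have htle : t ≤ ε * 2 / (c0 + 1) := min_le_right _ _
      have hbound : t / 2 * c0 ≤ ε := by
        have h1 : t * c0 ≤ (ε * 2 / (c0 + 1)) * c0 :=
          mul_le_mul_of_nonneg_right htle hc0nn
        have h2 : (ε * 2 / (c0 + 1)) * c0 ≤ ε * 2 := by
          rw [div_mul_eq_mul_div, div_le_iff₀ hc01]
          nlinarith
        linarith
      linarith
    linarith [le_of_forall_sub_le hεb]
  -- compute A0
  have hA0val : A0 = -(d ⬝ᵥ (B s).mulVec d) + γ * (d ⬝ᵥ (B s).mulVec H) := by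
    have h1 : splus - u = d - γ • H := by
      funext i; simp [hu, hd]; ring
    have h2 : e = -d := by
      funext i; simp [he, hd]
    rw [hA0, h1, h2, Matrix.mulVec_neg]
    rw [dotProduct_neg, sub_dotProduct, smul_dotProduct, smul_eq_mul]
    rw [dot_mulVec_symm hBh H d]
    ring
  -- descent lemma
  have hdesc : W splus ≤ W s + gW s ⬝ᵥ d + LW / 2 * sqnorm d :=
    descent_lemma S V hScv hSV W gW hWdiff LW hWlip s splus hsS hpS
  -- rewrite final inner product
  have hR : ((B s).mulVec (H - (n : ℝ)⁻¹ • ∑ i, h i s)) ⬝ᵥ d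
      = d ⬝ᵥ (B s).mulVec H + gW s ⬝ᵥ d := by
    rw [Matrix.mulVec_sub, hBhbar, sub_neg_eq_add, add_dotProduct,
      dotProduct_comm ((B s).mulVec H) d]
  -- divide by γ
  have hgp2 : gp ≤ gs - vmin / γ * sqnorm d + d ⬝ᵥ (B s).mulVec H := by
    have hexp : γ * (gs - vmin / γ * sqnorm d + d ⬝ᵥ (B s).mulVec H)
        = γ * gs - vmin * sqnorm d + γ * (d ⬝ᵥ (B s).mulVec H) := by
      field_simp
    have h2 : γ * gp ≤ γ * (gs - vmin / γ * sqnorm d + d ⬝ᵥ (B s).mulVec H) := by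
      rw [hexp]
      have := hquad d
      rw [hA0val] at hprox
      linarith
    exact (mul_le_mul_iff_right₀ hγ).mp h2
  -- conclude
  rw [hgseq, hgpeq, ← EReal.coe_add, ← EReal.coe_add, ← EReal.coe_add, EReal.coe_le_coe_iff]
  rw [hR]
  nlinarith [hdesc, hgp2]
end
end
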